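/- Let (U, ≼) be a finite partially ordered set with U = {u_0,…,u_{n−1}}, let X ⊆ U², Y ⊆ U², Z ⊆ U be nonempty with |X| ≥ 2 and |Y| ≥ 2. For each pair x = (x₁, x₂) ∈ X let T_x be the tree consisting of a root r_x adjacent to the vertex v_0 of a copy of OCat(x₁) and to the vertex v_0 of a copy of OCat(x₂), and let T be obtained from the disjoint union of the trees T_x (x ∈ X) by adding a vertex r_T adjacent to every r_x. Similarly, for each y = (y₁, y₂) ∈ Y let Q_y consist of a root r_y adjacent to the vertex v_0 of a copy of OCat(y₁) and to the vertex v_0 of a copy of OCat(y₂); for each z ∈ Z let R_z be a copy of OCat(z); and let P be obtained from the disjoint union of the Q_y (y ∈ Y) and the R_z (z ∈ Z) by adding a vertex r_P adjacent to every r_y and to the vertex v_0^z of every R_z. Then every minor embedding φ of P in T satisfies φ(r_T) = r_P. -/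

import Mathlib

/-- A minor embedding of `P` in `T`: a surjective `f : V(T) → V(P)` with connected preimages
of vertices such that every edge of `P` is realized by an edge of `T`. -/
def IsMinorEmbedding {V W : Type*} (T : SimpleGraph V) (P : SimpleGraph W) (f : V → W) : Prop :=
  Function.Surjective f ∧
  (∀ w : W, ((T.induce (f ⁻¹' {w})).Connected)) ∧
  (∀ ⦃u v : W⦄, P.Adj u v → ∃ u' v', T.Adj u' v' ∧ f u' = u ∧ f v' = v)

/-- Inclusive Poset Pair Cover: the instance `⟨(β,≼), X, (Y,Z)⟩` is a yes-instance if there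
are injections `f : Y → X` and `g : Z → X × {1,2}` such that (i) no value of `f` occurs as the
`X`-component of a value of `g`, (ii) `f (y₁,y₂) = (x₁,x₂)` implies `y₁ ≼ x₁ ∧ y₂ ≼ x₂` or
`y₂ ≼ x₁ ∧ y₁ ≼ x₂`, and (iii) `g z = ((x₁,x₂), i)` implies `z ≼ xᵢ`. -/
def IPPCYes {β : Type*} [PartialOrder β] (X Y : Finset (β × β)) (Z : Finset β) : Prop :=
  ∃ (f : {y // y ∈ Y} → {x // x ∈ X}) (g : {z // z ∈ Z} → {x // x ∈ X} × Fin 2),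
    Function.Injective f ∧ Function.Injective g ∧
    (∀ y z, f y ≠ (g z).1) ∧
    (∀ y : {y // y ∈ Y}, (y.1.1 ≤ (f y).1.1 ∧ y.1.2 ≤ (f y).1.2) ∨
          (y.1.2 ≤ (f y).1.1 ∧ y.1.1 ≤ (f y).1.2)) ∧
    (∀ z : {z // z ∈ Z}, z.1 ≤ (if (g z).2 = 0 then (g z).1.1.1 else (g z).1.1.2))

/-- Vertices of the order caterpillar `OCat(a)`: spine vertices `v_0ᵃ,…,v_{n+1}ᵃ`
(`Sum.inl`) and a pendant leaf `l_iᵃ` for each `i < n` with `u_i ≼ a` (`Sum.inr`). -/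
def OCatVert {α : Type*} [PartialOrder α] (n : ℕ) (u : Fin n → α) (a : α) : Type _ :=
  Fin (n + 2) ⊕ {i : Fin n // u i ≤ a}

/-- Base adjacency of `OCat(a)`: consecutive spine vertices are adjacent, and the leaf
`l_iᵃ` is attached to the spine vertex `v_iᵃ`. -/
def OCatRel {α : Type*} [PartialOrder α] (n : ℕ) (u : Fin n → α) (a : α) :
    OCatVert n u a → OCatVert n u a → Prop
  | .inl i, .inl j => (j : ℕ) = (i : ℕ) + 1
  | .inl i, .inr j => (i : ℕ) = (j.1 : ℕ)
  | _, _ => False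

/-- Vertices of the tree `T_x` (for `x = (x₁,x₂)`): a root `r_x` (`Sum.inl`), a copy of
`OCat(x₁)` and a copy of `OCat(x₂)`. -/
def PairTreeVert {α : Type*} [PartialOrder α] (n : ℕ) (u : Fin n → α) (x : α × α) : Type _ :=
  Unit ⊕ (OCatVert n u x.1 ⊕ OCatVert n u x.2)

/-- Base adjacency of `T_x`: the root is adjacent to the vertex `v_0` of each of the two
order caterpillars, whose internal edges are kept. -/
def PairTreeRel {α : Type*} [PartialOrder α] (n : ℕ) (u : Fin n → α) (x : α × α) :
    PairTreeVert n u x → PairTreeVert n u x → Prop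
  | .inl _, .inr (.inl (.inl i)) => (i : ℕ) = 0
  | .inl _, .inr (.inr (.inl i)) => (i : ℕ) = 0
  | .inr (.inl w), .inr (.inl w') => OCatRel n u x.1 w w'
  | .inr (.inr w), .inr (.inr w') => OCatRel n u x.2 w w'
  | _, _ => False

/-- Vertices of `T`: the root `r_T` together with the disjoint union of the trees `T_x`,
`x ∈ X`. -/
def BigTVert {α : Type*} [PartialOrder α] (n : ℕ) (u : Fin n → α) (X : Finset (α × α)) :
    Type _ :=
  Unit ⊕ (Σ x : {x : α × α // x ∈ X}, PairTreeVert n u x.1)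

/-- Base adjacency of `T`: `r_T` is adjacent to every root `r_x`, and the edges inside each
`T_x` are kept. -/
def BigTRel {α : Type*} [PartialOrder α] (n : ℕ) (u : Fin n → α) (X : Finset (α × α)) :
    BigTVert n u X → BigTVert n u X → Prop
  | .inl _, .inr ⟨_, .inl _⟩ => True
  | .inr a, .inr b => ∃ h : a.1 = b.1, PairTreeRel n u b.1.1 (h ▸ a.2) b.2
  | _, _ => False

/-- The tree `T`. -/
def BigT {α : Type*} [PartialOrder α] (n : ℕ) (u : Fin n → α) (X : Finset (α × α)) :
    SimpleGraph (BigTVert n u X) :=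
  SimpleGraph.fromRel (BigTRel n u X)

/-- Vertices of `P`: the root `r_P` together with the disjoint union of the trees `Q_y`
(`y ∈ Y`) and the order caterpillars `R_z` (`z ∈ Z`). -/
def BigPVert {α : Type*} [PartialOrder α] (n : ℕ) (u : Fin n → α) (Y : Finset (α × α))
    (Z : Finset α) : Type _ :=
  Unit ⊕ ((Σ y : {y : α × α // y ∈ Y}, PairTreeVert n u y.1) ⊕
          (Σ z : {z : α // z ∈ Z}, OCatVert n u z.1))

/-- Base adjacency of `P`: `r_P` is adjacent to every root `r_y` and to the spine vertex
`v_0` of every `R_z`; the edges inside each `Q_y` and each `R_z` are kept. -/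
def BigPRel {α : Type*} [PartialOrder α] (n : ℕ) (u : Fin n → α) (Y : Finset (α × α))
    (Z : Finset α) : BigPVert n u Y Z → BigPVert n u Y Z → Prop
  | .inl _, .inr (.inl ⟨_, .inl _⟩) => True
  | .inl _, .inr (.inr ⟨_, .inl i⟩) => (i : ℕ) = 0
  | .inr (.inl a), .inr (.inl b) => ∃ h : a.1 = b.1, PairTreeRel n u b.1.1 (h ▸ a.2) b.2
  | .inr (.inr a), .inr (.inr b) => ∃ h : a.1 = b.1, OCatRel n u b.1.1 (h ▸ a.2) b.2
  | _, _ => False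

/-- The tree `P`. -/
def BigP {α : Type*} [PartialOrder α] (n : ℕ) (u : Fin n → α) (Y : Finset (α × α))
    (Z : Finset α) : SimpleGraph (BigPVert n u Y Z) :=
  SimpleGraph.fromRel (BigPRel n u Y Z)

section Tside
variable {α : Type*} [PartialOrder α] (n : ℕ) (u : Fin n → α) (X : Finset (α × α))

def tleaf : BigTVert n u X → Prop := fun v =>
  match v with
  | .inr ⟨_, .inr (.inl (.inr _))⟩ => True
  | .inr ⟨_, .inr (.inr (.inr _))⟩ => True
  | _ => False

def tpos : BigTVert n u X → ℤ := fun v =>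
  match v with
  | .inl _ => 0
  | .inr ⟨_, .inl _⟩ => 0
  | .inr ⟨_, .inr (.inl (.inl i))⟩ => -((i:ℤ)+1)
  | .inr ⟨_, .inr (.inl (.inr j))⟩ => -((j.1:ℤ)+1)
  | .inr ⟨_, .inr (.inr (.inl i))⟩ => (i:ℤ)+1
  | .inr ⟨_, .inr (.inr (.inr j))⟩ => (j.1:ℤ)+1

def tcomp : BigTVert n u X → Option {x : α × α // x ∈ X} := fun v =>
  match v with
  | .inl _ => none
  | .inr ⟨x, _⟩ => some x

variable {n u X}

lemma tcomp_adj {a b : BigTVert n u X} (h : (BigT n u X).Adj a b)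
    (ha : a ≠ Sum.inl ()) (hb : b ≠ Sum.inl ()) : tcomp n u X a = tcomp n u X b := by
  rw [BigT, SimpleGraph.fromRel_adj] at h
  obtain ⟨-, h | h⟩ := h <;>
  · rcases a with _ | ⟨xa, pa⟩
    · exact absurd rfl ha
    · rcases b with _ | ⟨xb, pb⟩
      · exact absurd rfl hb
      · obtain ⟨h', -⟩ := h
        simp only [tcomp]
        simp_all
lemma ocatRel_cases {a : α} {v w : OCatVert n u a} (h : OCatRel n u a v w) :
    (∃ i j : Fin (n+2), v = .inl i ∧ w = .inl j ∧ (j:ℕ) = (i:ℕ) + 1) ∨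
    (∃ (i : Fin (n+2)) (j : {i : Fin n // u i ≤ a}), v = .inl i ∧ w = .inr j ∧ (i:ℕ) = (j.1:ℕ)) := by
  rcases v with i | j <;> rcases w with i' | j'
  · exact Or.inl ⟨i, i', rfl, rfl, h⟩
  · exact Or.inr ⟨i, j', rfl, rfl, h⟩
  · exact h.elim
  · exact h.elim

lemma pairTreeRel_cases {x : α × α} {v w : PairTreeVert n u x} (h : PairTreeRel n u x v w) :
    (∃ i : Fin (n+2), v = .inl () ∧ w = .inr (.inl (.inl i)) ∧ (i:ℕ) = 0) ∨
    (∃ i : Fin (n+2), v = .inl () ∧ w = .inr (.inr (.inl i)) ∧ (i:ℕ) = 0) ∨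
    (∃ v' w', v = .inr (.inl v') ∧ w = .inr (.inl w') ∧ OCatRel n u x.1 v' w') ∨
    (∃ v' w', v = .inr (.inr v') ∧ w = .inr (.inr w') ∧ OCatRel n u x.2 v' w') := by
  rcases v with _ | (v' | v') <;> rcases w with _ | (w' | w')
  · exact h.elim
  · rcases w' with i | j
    · exact Or.inl ⟨i, rfl, rfl, h⟩
    · exact h.elim
  · rcases w' with i | j
    · exact Or.inr (Or.inl ⟨i, rfl, rfl, h⟩)
    · exact h.elim
  · exact h.elim
  · exact Or.inr (Or.inr (Or.inl ⟨v', w', rfl, rfl, h⟩))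
  · exact h.elim
  · exact h.elim
  · exact h.elim
  · exact Or.inr (Or.inr (Or.inr ⟨v', w', rfl, rfl, h⟩))

lemma bigTRel_cases {a b : BigTVert n u X} (h : BigTRel n u X a b) :
    (∃ x, a = Sum.inl () ∧ b = Sum.inr ⟨x, .inl ()⟩) ∨
    (∃ x pa pb, a = Sum.inr ⟨x, pa⟩ ∧ b = Sum.inr ⟨x, pb⟩ ∧ PairTreeRel n u x.1 pa pb) := by
  rcases a with _ | ⟨xa, pa⟩ <;> rcases b with _ | ⟨xb, pb⟩
  · exact h.elim
  · rcases pb with _ | pb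
    · exact Or.inl ⟨xb, rfl, rfl⟩
    · exact h.elim
  · exact h.elim
  · obtain ⟨h1, h2⟩ := h
    dsimp only at h1
    subst h1
    exact Or.inr ⟨xa, pa, pb, rfl, rfl, h2⟩
def leafSpine : BigTVert n u X → BigTVert n u X := fun v =>
  match v with
  | .inr ⟨x, .inr (.inl (.inr j))⟩ => .inr ⟨x, .inr (.inl (.inl (Fin.castLE (by omega) j.1)))⟩
  | .inr ⟨x, .inr (.inr (.inr j))⟩ => .inr ⟨x, .inr (.inr (.inl (Fin.castLE (by omega) j.1)))⟩
  | v => v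

lemma leaf_no_out {a b : BigTVert n u X} (h : BigTRel n u X a b) (ha : tleaf n u X a) :
    False := by
  rcases bigTRel_cases h with ⟨x, rfl, rfl⟩ | ⟨x, pa, pb, rfl, rfl, hp⟩
  · exact ha
  · rcases pairTreeRel_cases hp with ⟨i, rfl, rfl, -⟩ | ⟨i, rfl, rfl, -⟩ |
      ⟨v', w', rfl, rfl, h⟩ | ⟨v', w', rfl, rfl, h⟩ <;>
    · first
      | exact ha
      | rcases ocatRel_cases hp with ⟨i, j, rfl, rfl, -⟩ | ⟨i, j, rfl, rfl, -⟩ <;> exact ha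

lemma leaf_in {a b : BigTVert n u X} (h : BigTRel n u X a b) (hb : tleaf n u X b) :
    a = leafSpine b := by
  rcases bigTRel_cases h with ⟨x, rfl, rfl⟩ | ⟨x, pa, pb, rfl, rfl, hp⟩
  · exact hb.elim
  · rcases pairTreeRel_cases hp with ⟨i, rfl, rfl, -⟩ | ⟨i, rfl, rfl, -⟩ |
      ⟨v', w', rfl, rfl, h⟩ | ⟨v', w', rfl, rfl, hp⟩
    · exact hb.elim
    · exact hb.elim
    · rcases ocatRel_cases hp with ⟨i, j, rfl, rfl, -⟩ | ⟨i, j, rfl, rfl, hij⟩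
      · exact hb.elim
      · have : i = Fin.castLE (by omega) j.1 := Fin.ext (by simpa using hij)
        rw [this]; rfl
    · rcases ocatRel_cases hp with ⟨i, j, rfl, rfl, -⟩ | ⟨i, j, rfl, rfl, hij⟩
      · exact hb.elim
      · have : i = Fin.castLE (by omega) j.1 := Fin.ext (by simpa using hij)
        rw [this]; rfl

lemma leaf_nbr {a b : BigTVert n u X} (h : (BigT n u X).Adj a b) (hb : tleaf n u X b) :
    a = leafSpine b := by
  rw [BigT, SimpleGraph.fromRel_adj] at h
  obtain ⟨-, h | h⟩ := h
  · exact leaf_in h hb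
  · exact absurd hb (fun hb => leaf_no_out h hb)

lemma leafSpine_props {b : BigTVert n u X} (hb : tleaf n u X b) :
    ¬ tleaf n u X (leafSpine b) ∧ leafSpine b ≠ Sum.inl () ∧
      tpos n u X (leafSpine b) = tpos n u X b := by
  rcases b with _ | ⟨x, _ | (i | j) | (i | j)⟩ <;>
    first
    | exact hb.elim
    | exact ⟨fun h => h, fun h => Sum.inr_ne_inl h, rfl⟩

lemma leaf_adj {a b : BigTVert n u X} (h : (BigT n u X).Adj a b) (hb : tleaf n u X b) :
    ¬ tleaf n u X a ∧ a ≠ Sum.inl () ∧ tpos n u X a = tpos n u X b := by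
  rw [leaf_nbr h hb]; exact leafSpine_props hb

lemma leaf_adj_unique {a a' b : BigTVert n u X} (h : (BigT n u X).Adj a b)
    (h' : (BigT n u X).Adj a' b) (hb : tleaf n u X b) : a = a' :=
  (leaf_nbr h hb).trans (leaf_nbr h' hb).symm

lemma nonleaf_adj_pos {a b : BigTVert n u X} (h : (BigT n u X).Adj a b)
    (ha : a ≠ Sum.inl ()) (hb : b ≠ Sum.inl ())
    (la : ¬ tleaf n u X a) (lb : ¬ tleaf n u X b) :
    tpos n u X b = tpos n u X a + 1 ∨ tpos n u X a = tpos n u X b + 1 := by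
  have key : ∀ c d : BigTVert n u X, BigTRel n u X c d → c ≠ Sum.inl () →
      ¬ tleaf n u X d → tpos n u X d = tpos n u X c + 1 ∨ tpos n u X c = tpos n u X d + 1 := by
    intro c d h hc ld
    rcases bigTRel_cases h with ⟨x, rfl, rfl⟩ | ⟨x, pc, pd, rfl, rfl, hp⟩
    · exact absurd rfl hc
    · rcases pairTreeRel_cases hp with ⟨i, rfl, rfl, hi⟩ | ⟨i, rfl, rfl, hi⟩ |
        ⟨v', w', rfl, rfl, h⟩ | ⟨v', w', rfl, rfl, hp⟩
      · right; simp [tpos]; exact Fin.ext (by simp [hi])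
      · left; simp [tpos]; exact Fin.ext (by simp [hi])
      · rcases ocatRel_cases hp with ⟨i, j, rfl, rfl, hij⟩ | ⟨i, j, rfl, rfl, -⟩
        · right; simp [tpos]; omega
        · exact (ld trivial).elim
      · rcases ocatRel_cases hp with ⟨i, j, rfl, rfl, hij⟩ | ⟨i, j, rfl, rfl, -⟩
        · left; simp [tpos]; omega
        · exact (ld trivial).elim
  rw [BigT, SimpleGraph.fromRel_adj] at h
  obtain ⟨-, h | h⟩ := h
  · exact key a b h ha lb
  · exact (key b a h hb la).symm

lemma nonleaf_ext {a b : BigTVert n u X}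
    (ha : a ≠ Sum.inl ()) (hb : b ≠ Sum.inl ())
    (la : ¬ tleaf n u X a) (lb : ¬ tleaf n u X b)
    (hc : tcomp n u X a = tcomp n u X b) (hp : tpos n u X a = tpos n u X b) : a = b := by
  rcases a with _ | ⟨xa, ⟨⟩ | (ia | ja) | (ia | ja)⟩ <;>
    rcases b with _ | ⟨xb, ⟨⟩ | (ib | jb) | (ib | jb)⟩ <;>
    first
    | exact absurd rfl ha
    | exact absurd rfl hb
    | exact (la trivial).elim
    | exact (lb trivial).elim
    | (simp only [tcomp, tpos, Option.some_inj] at hc hp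
       first
       | omega
       | (subst hc; rfl)
       | (subst hc
          have h2 : ia = ib := Fin.ext (by omega)
          rw [h2]))
lemma walk_tcomp {S : Set (BigTVert n u X)} (hS : Sum.inl () ∉ S) {a b : ↥S}
    (p : ((BigT n u X).induce S).Walk a b) : tcomp n u X a.1 = tcomp n u X b.1 := by
  induction p with
  | nil => rfl
  | @cons a c b h q ih =>
    refine Eq.trans ?_ ih
    have hadj : (BigT n u X).Adj a.1 c.1 := h
    exact tcomp_adj hadj (fun h => hS (h ▸ a.2)) (fun h => hS (h ▸ c.2))

lemma walk_cross {S : Set (BigTVert n u X)} (hS : Sum.inl () ∉ S) {a b : ↥S}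
    (p : ((BigT n u X).induce S).Walk a b) (m : ℤ)
    (hma : tpos n u X a.1 ≤ m) (hmb : m < tpos n u X b.1) :
    ∃ s t : BigTVert n u X, s ∈ S ∧ t ∈ S ∧ (BigT n u X).Adj s t ∧
      ¬ tleaf n u X s ∧ ¬ tleaf n u X t ∧ tpos n u X s = m ∧ tpos n u X t = m + 1 := by
  induction p with
  | nil => omega
  | @cons a c b h q ih =>
    have hadj : (BigT n u X).Adj a.1 c.1 := h
    by_cases hc : tpos n u X c.1 ≤ m
    · exact ih hc hmb
    · push_neg at hc
      by_cases lc : tleaf n u X c.1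
      · have := leaf_adj hadj lc
        omega
      · by_cases la : tleaf n u X a.1
        · have := leaf_adj hadj.symm la
          omega
        · have hd := nonleaf_adj_pos hadj (fun h => hS (h ▸ a.2)) (fun h => hS (h ▸ c.2)) la lc
          have h1 : tpos n u X a.1 = m := by omega
          have h2 : tpos n u X c.1 = m + 1 := by omega
          exact ⟨a.1, c.1, a.2, c.2, hadj, la, lc, h1, h2⟩

lemma leaf_step {S : Set (BigTVert n u X)} {a b : ↥S} (hne : a.1 ≠ b.1)
    (p : ((BigT n u X).induce S).Walk a b) :
    ∃ c, c ∈ S ∧ (BigT n u X).Adj c a.1 := by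
  cases p with
  | nil => exact absurd rfl hne
  | @cons a c b h q =>
    have hadj : (BigT n u X).Adj a.1 c.1 := h
    exact ⟨c.1, c.2, hadj.symm⟩
lemma exists_nonleaf {S P Q : Set (BigTVert n u X)}
    (hconnS : ((BigT n u X).induce S).Connected)
    (hSP : Disjoint S P) (hPQ : Disjoint P Q)
    (e1 : ∃ s ∈ S, ∃ p ∈ P, (BigT n u X).Adj s p)
    (e2 : ∃ s ∈ S, ∃ q ∈ Q, (BigT n u X).Adj s q) :
    ∃ s ∈ S, ¬ tleaf n u X s := by
  by_contra hall
  push_neg at hall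
  obtain ⟨s1, hs1, p1, hp1, e1⟩ := e1
  obtain ⟨s2, hs2, q1, hq1, e2⟩ := e2
  by_cases hss : s1 = s2
  · subst hss
    have : p1 = q1 := leaf_adj_unique e1.symm e2.symm (hall s1 hs1)
    exact Set.disjoint_left.mp hPQ hp1 (this ▸ hq1)
  · obtain ⟨w⟩ := hconnS ⟨s1, hs1⟩ ⟨s2, hs2⟩
    obtain ⟨c, hc, hadj⟩ := leaf_step (a := ⟨s1, hs1⟩) (b := ⟨s2, hs2⟩) hss w
    have : c = p1 := leaf_adj_unique hadj e1.symm (hall s1 hs1)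
    exact Set.disjoint_left.mp hSP (this ▸ hc) hp1

lemma arm_edge {A B : Set (BigTVert n u X)}
    (hconnA : ((BigT n u X).induce A).Connected)
    (hconnB : ((BigT n u X).induce B).Connected)
    (hAB : Disjoint A B)
    (hAnl : ∃ a ∈ A, ¬ tleaf n u X a) (hBnl : ∃ b ∈ B, ¬ tleaf n u X b)
    (e : ∃ a ∈ A, ∃ b ∈ B, (BigT n u X).Adj a b) :
    ∃ a b, a ∈ A ∧ b ∈ B ∧ (BigT n u X).Adj a b ∧ ¬ tleaf n u X a ∧ ¬ tleaf n u X b := by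
  obtain ⟨a, ha, b, hb, e⟩ := e
  have hla : ¬ tleaf n u X a := by
    intro hla
    obtain ⟨a0, ha0, hla0⟩ := hAnl
    have hne : a ≠ a0 := fun h => hla0 (h ▸ hla)
    obtain ⟨w⟩ := hconnA ⟨a, ha⟩ ⟨a0, ha0⟩
    obtain ⟨c, hc, hadj⟩ := leaf_step (a := ⟨a, ha⟩) (b := ⟨a0, ha0⟩) hne w
    have : c = b := leaf_adj_unique hadj e.symm hla
    exact Set.disjoint_left.mp hAB (this ▸ hc) hb
  have hlb : ¬ tleaf n u X b := by
    intro hlb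
    obtain ⟨b0, hb0, hlb0⟩ := hBnl
    have hne : b ≠ b0 := fun h => hlb0 (h ▸ hlb)
    obtain ⟨w⟩ := hconnB ⟨b, hb⟩ ⟨b0, hb0⟩
    obtain ⟨c, hc, hadj⟩ := leaf_step (a := ⟨b, hb⟩) (b := ⟨b0, hb0⟩) hne w
    have : c = a := leaf_adj_unique hadj e hlb
    exact Set.disjoint_left.mp hAB ha (this ▸ hc)
  exact ⟨a, b, ha, hb, e, hla, hlb⟩

lemma spider {A B1 B2 B3 C1 C2 C3 : Set (BigTVert n u X)}
    (hconnA : ((BigT n u X).induce A).Connected)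
    (hconnB1 : ((BigT n u X).induce B1).Connected)
    (hconnB2 : ((BigT n u X).induce B2).Connected)
    (hconnB3 : ((BigT n u X).induce B3).Connected)
    (hrA : Sum.inl () ∉ A)
    (hrB1 : Sum.inl () ∉ B1) (hrB2 : Sum.inl () ∉ B2) (hrB3 : Sum.inl () ∉ B3)
    (dAB1 : Disjoint A B1) (dAB2 : Disjoint A B2) (dAB3 : Disjoint A B3)
    (dAC1 : Disjoint A C1) (dAC2 : Disjoint A C2) (dAC3 : Disjoint A C3)
    (dB12 : Disjoint B1 B2) (dB13 : Disjoint B1 B3) (dB23 : Disjoint B2 B3)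
    (dB1C1 : Disjoint B1 C1) (dB2C2 : Disjoint B2 C2) (dB3C3 : Disjoint B3 C3)
    (eAB1 : ∃ a ∈ A, ∃ b ∈ B1, (BigT n u X).Adj a b)
    (eAB2 : ∃ a ∈ A, ∃ b ∈ B2, (BigT n u X).Adj a b)
    (eAB3 : ∃ a ∈ A, ∃ b ∈ B3, (BigT n u X).Adj a b)
    (eB1C1 : ∃ b ∈ B1, ∃ c ∈ C1, (BigT n u X).Adj b c)
    (eB2C2 : ∃ b ∈ B2, ∃ c ∈ C2, (BigT n u X).Adj b c)
    (eB3C3 : ∃ b ∈ B3, ∃ c ∈ C3, (BigT n u X).Adj b c) : False := by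
  -- A contains a non-leaf
  have hAnl : ∃ s ∈ A, ¬ tleaf n u X s := exists_nonleaf hconnA dAB1 dB12 eAB1 eAB2
  -- each B_i contains a non-leaf
  have hB1nl : ∃ s ∈ B1, ¬ tleaf n u X s := by
    refine exists_nonleaf hconnB1 (dAB1.symm) dAC1 ?_ eB1C1
    obtain ⟨a, ha, b, hb, e⟩ := eAB1; exact ⟨b, hb, a, ha, e.symm⟩
  have hB2nl : ∃ s ∈ B2, ¬ tleaf n u X s := by
    refine exists_nonleaf hconnB2 (dAB2.symm) dAC2 ?_ eB2C2
    obtain ⟨a, ha, b, hb, e⟩ := eAB2; exact ⟨b, hb, a, ha, e.symm⟩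
  have hB3nl : ∃ s ∈ B3, ¬ tleaf n u X s := by
    refine exists_nonleaf hconnB3 (dAB3.symm) dAC3 ?_ eB3C3
    obtain ⟨a, ha, b, hb, e⟩ := eAB3; exact ⟨b, hb, a, ha, e.symm⟩
  -- refined arm edges
  obtain ⟨a1, b1, ha1, hb1, e1, la1, lb1⟩ := arm_edge hconnA hconnB1 dAB1 hAnl hB1nl eAB1
  obtain ⟨a2, b2, ha2, hb2, e2, la2, lb2⟩ := arm_edge hconnA hconnB2 dAB2 hAnl hB2nl eAB2
  obtain ⟨a3, b3, ha3, hb3, e3, la3, lb3⟩ := arm_edge hconnA hconnB3 dAB3 hAnl hB3nl eAB3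
  -- all of A has the same component, and the b_i's share it
  have hninl : ∀ {S : Set (BigTVert n u X)}, Sum.inl () ∉ S → ∀ v ∈ S, v ≠ Sum.inl () :=
    fun hS v hv h => hS (h ▸ hv)
  have hAc : ∀ v ∈ A, ∀ w ∈ A, tcomp n u X v = tcomp n u X w := by
    intro v hv w hw
    obtain ⟨p⟩ := hconnA ⟨v, hv⟩ ⟨w, hw⟩
    exact walk_tcomp hrA p
  have hb1c : tcomp n u X b1 = tcomp n u X a1 :=
    (tcomp_adj e1 (hninl hrA a1 ha1) (hninl hrB1 b1 hb1)).symm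
  have hb2c : tcomp n u X b2 = tcomp n u X a2 :=
    (tcomp_adj e2 (hninl hrA a2 ha2) (hninl hrB2 b2 hb2)).symm
  have hb3c : tcomp n u X b3 = tcomp n u X a3 :=
    (tcomp_adj e3 (hninl hrA a3 ha3) (hninl hrB3 b3 hb3)).symm
  -- the interval of spine positions of A
  set I : Set ℤ := {m | ∃ v ∈ A, ¬ tleaf n u X v ∧ tpos n u X v = m} with hI
  have cross : ∀ p ∈ I, ∀ q ∈ I, ∀ m : ℤ, p ≤ m → m < q → m ∈ I ∧ (m + 1) ∈ I := by
    intro p hp q hq m h1 h2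
    obtain ⟨vp, hvp, lvp, rfl⟩ := hp
    obtain ⟨vq, hvq, lvq, rfl⟩ := hq
    obtain ⟨w⟩ := hconnA ⟨vp, hvp⟩ ⟨vq, hvq⟩
    obtain ⟨s, t, hs, ht, -, ls, lt, hps, hpt⟩ := walk_cross hrA w m h1 h2
    exact ⟨⟨s, hs, ls, hps⟩, ⟨t, ht, lt, hpt⟩⟩
  have haI1 : tpos n u X a1 ∈ I := ⟨a1, ha1, la1, rfl⟩
  have haI2 : tpos n u X a2 ∈ I := ⟨a2, ha2, la2, rfl⟩
  have haI3 : tpos n u X a3 ∈ I := ⟨a3, ha3, la3, rfl⟩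
  have hbI : ∀ (B : Set (BigTVert n u X)) (b : BigTVert n u X), b ∈ B → Disjoint A B →
      Sum.inl () ∉ B → ¬ tleaf n u X b → tcomp n u X b = tcomp n u X a1 →
      tpos n u X b ∉ I := by
    intro B b hb hAB hrB lb hcb hmem
    obtain ⟨v, hv, lv, hpv⟩ := hmem
    have : v = b := by
      refine nonleaf_ext (hninl hrA v hv) (hninl hrB b hb) lv lb ?_ hpv
      exact (hAc v hv a1 ha1).trans hcb.symm
    exact Set.disjoint_left.mp hAB (this ▸ hv) hb
  have hbI1 : tpos n u X b1 ∉ I := hbI B1 b1 hb1 dAB1 hrB1 lb1 (hb1c.trans (hAc a1 ha1 a1 ha1))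
  have hbI2 : tpos n u X b2 ∉ I := hbI B2 b2 hb2 dAB2 hrB2 lb2 (hb2c.trans (hAc a2 ha2 a1 ha1))
  have hbI3 : tpos n u X b3 ∉ I := hbI B3 b3 hb3 dAB3 hrB3 lb3 (hb3c.trans (hAc a3 ha3 a1 ha1))
  -- up/down uniqueness
  have up_eq : ∀ p ∈ I, ∀ p' ∈ I, ∀ q q' : ℤ, q ∉ I → q' ∉ I → q = p + 1 → q' = p' + 1 →
      q = q' := by
    intro p hp p' hp' q q' hq hq' h1 h2
    rcases lt_trichotomy p p' with h | h | h
    · exact absurd ((cross p hp p' hp' p le_rfl h).2) (h1 ▸ hq)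
    · omega
    · exact absurd ((cross p' hp' p hp p' le_rfl h).2) (h2 ▸ hq')
  have dn_eq : ∀ p ∈ I, ∀ p' ∈ I, ∀ q q' : ℤ, q ∉ I → q' ∉ I → p = q + 1 → p' = q' + 1 →
      q = q' := by
    intro p hp p' hp' q q' hq hq' h1 h2
    rcases lt_trichotomy p p' with h | h | h
    · have := (cross p hp p' hp' (p' - 1) (by omega) (by omega)).1
      by_cases hqq : q = q'
      · exact hqq
      · exact absurd this (by
          have : p' - 1 = q' := by omega
          exact this ▸ hq')
    · omega
    · have := (cross p' hp' p hp (p - 1) (by omega) (by omega)).1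
      exact absurd this (by
        have : p - 1 = q := by omega
        exact this ▸ hq)
  have fin : ∀ (Bi Bj : Set (BigTVert n u X)) (bi bj : BigTVert n u X), bi ∈ Bi → bj ∈ Bj →
      Disjoint Bi Bj → Sum.inl () ∉ Bi → Sum.inl () ∉ Bj → ¬ tleaf n u X bi →
      ¬ tleaf n u X bj → tcomp n u X bi = tcomp n u X bj → tpos n u X bi = tpos n u X bj →
      False := by
    intro Bi Bj bi bj hbi hbj hd hri hrj li lj hct hpt
    have : bi = bj := nonleaf_ext (hninl hri bi hbi) (hninl hrj bj hbj) li lj hct hpt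
    exact Set.disjoint_left.mp hd (this ▸ hbi) hbj
  have c12 : tcomp n u X b1 = tcomp n u X b2 := by
    rw [hb1c, hb2c]; exact hAc a1 ha1 a2 ha2
  have c13 : tcomp n u X b1 = tcomp n u X b3 := by
    rw [hb1c, hb3c]; exact hAc a1 ha1 a3 ha3
  have c23 : tcomp n u X b2 = tcomp n u X b3 := by
    rw [hb2c, hb3c]; exact hAc a2 ha2 a3 ha3
  have d1 := nonleaf_adj_pos e1 (hninl hrA a1 ha1) (hninl hrB1 b1 hb1) la1 lb1
  have d2 := nonleaf_adj_pos e2 (hninl hrA a2 ha2) (hninl hrB2 b2 hb2) la2 lb2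
  have d3 := nonleaf_adj_pos e3 (hninl hrA a3 ha3) (hninl hrB3 b3 hb3) la3 lb3
  rcases d1 with d1 | d1 <;> rcases d2 with d2 | d2 <;> rcases d3 with d3 | d3
  · exact fin B1 B2 b1 b2 hb1 hb2 dB12 hrB1 hrB2 lb1 lb2 c12
      (up_eq _ haI1 _ haI2 _ _ hbI1 hbI2 d1 d2)
  · exact fin B1 B2 b1 b2 hb1 hb2 dB12 hrB1 hrB2 lb1 lb2 c12
      (up_eq _ haI1 _ haI2 _ _ hbI1 hbI2 d1 d2)
  · exact fin B1 B3 b1 b3 hb1 hb3 dB13 hrB1 hrB3 lb1 lb3 c13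
      (up_eq _ haI1 _ haI3 _ _ hbI1 hbI3 d1 d3)
  · exact fin B2 B3 b2 b3 hb2 hb3 dB23 hrB2 hrB3 lb2 lb3 c23
      (dn_eq _ haI2 _ haI3 _ _ hbI2 hbI3 d2 d3)
  · exact fin B2 B3 b2 b3 hb2 hb3 dB23 hrB2 hrB3 lb2 lb3 c23
      (up_eq _ haI2 _ haI3 _ _ hbI2 hbI3 d2 d3)
  · exact fin B1 B3 b1 b3 hb1 hb3 dB13 hrB1 hrB3 lb1 lb3 c13
      (dn_eq _ haI1 _ haI3 _ _ hbI1 hbI3 d1 d3)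
  · exact fin B1 B2 b1 b2 hb1 hb2 dB12 hrB1 hrB2 lb1 lb2 c12
      (dn_eq _ haI1 _ haI2 _ _ hbI1 hbI2 d1 d2)
  · exact fin B1 B2 b1 b2 hb1 hb2 dB12 hrB1 hrB2 lb1 lb2 c12
      (dn_eq _ haI1 _ haI2 _ _ hbI1 hbI2 d1 d2)
variable {Y : Finset (α × α)} {Z : Finset α}

def pmark : BigPVert n u Y Z → ℕ := fun v =>
  match v with
  | .inl _ => 0
  | .inr (.inl ⟨_, .inl _⟩) => 1
  | .inr (.inl ⟨_, .inr (.inl (.inl i))⟩) => 10 + (i : ℕ)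
  | .inr (.inl ⟨_, .inr (.inl (.inr _))⟩) => 2
  | .inr (.inl ⟨_, .inr (.inr (.inl i))⟩) => 100 + (i : ℕ)
  | .inr (.inl ⟨_, .inr (.inr (.inr _))⟩) => 3
  | .inr (.inr ⟨_, .inl _⟩) => 4
  | .inr (.inr ⟨_, .inr _⟩) => 5

lemma master (φ : BigTVert n u X → BigPVert n u Y Z)
    (hφ : IsMinorEmbedding (BigT n u X) (BigP n u Y Z) φ)
    (y1 : {y : α × α // y ∈ Y}) (c3 : BigPVert n u Y Z)
    (hc3adj : (BigP n u Y Z).Adj (Sum.inl ()) c3)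
    (hc3a : c3 ≠ Sum.inl ())
    (hc3b : ∀ v, c3 ≠ Sum.inr (Sum.inl ⟨y1, v⟩))
    (hw1 : φ (Sum.inl ()) ≠ Sum.inl ())
    (hw2 : ∀ v, φ (Sum.inl ()) ≠ Sum.inr (Sum.inl ⟨y1, v⟩))
    (hw3 : φ (Sum.inl ()) ≠ c3) : False := by
  obtain ⟨hsurj, hconn, hedge⟩ := hφ
  set pA : BigPVert n u Y Z := Sum.inr (Sum.inl ⟨y1, Sum.inl ()⟩) with hpA
  set pB1 : BigPVert n u Y Z :=
    Sum.inr (Sum.inl ⟨y1, Sum.inr (Sum.inl (Sum.inl (⟨0, by omega⟩ : Fin (n+2))))⟩) with hpB1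
  set pC1 : BigPVert n u Y Z :=
    Sum.inr (Sum.inl ⟨y1, Sum.inr (Sum.inl (Sum.inl (⟨1, by omega⟩ : Fin (n+2))))⟩) with hpC1
  set pB2 : BigPVert n u Y Z :=
    Sum.inr (Sum.inl ⟨y1, Sum.inr (Sum.inr (Sum.inl (⟨0, by omega⟩ : Fin (n+2))))⟩) with hpB2
  set pC2 : BigPVert n u Y Z :=
    Sum.inr (Sum.inl ⟨y1, Sum.inr (Sum.inr (Sum.inl (⟨1, by omega⟩ : Fin (n+2))))⟩) with hpC2
  set pB3 : BigPVert n u Y Z := Sum.inl () with hpB3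
  -- P-adjacencies
  have adjAB1 : (BigP n u Y Z).Adj pA pB1 := by
    rw [BigP, SimpleGraph.fromRel_adj]
    exact ⟨fun h => by have := congrArg (pmark (Y := Y) (Z := Z)) h; simp [pmark, pA, pB1, pB2, pB3, pC1, pC2] at this, Or.inl ⟨rfl, rfl⟩⟩
  have adjAB2 : (BigP n u Y Z).Adj pA pB2 := by
    rw [BigP, SimpleGraph.fromRel_adj]
    exact ⟨fun h => by have := congrArg (pmark (Y := Y) (Z := Z)) h; simp [pmark, pA, pB1, pB2, pB3, pC1, pC2] at this, Or.inl ⟨rfl, rfl⟩⟩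
  have adjB1C1 : (BigP n u Y Z).Adj pB1 pC1 := by
    rw [BigP, SimpleGraph.fromRel_adj]
    exact ⟨fun h => by have := congrArg (pmark (Y := Y) (Z := Z)) h; simp [pmark, pA, pB1, pB2, pB3, pC1, pC2] at this, Or.inl ⟨rfl, rfl⟩⟩
  have adjB2C2 : (BigP n u Y Z).Adj pB2 pC2 := by
    rw [BigP, SimpleGraph.fromRel_adj]
    exact ⟨fun h => by have := congrArg (pmark (Y := Y) (Z := Z)) h; simp [pmark, pA, pB1, pB2, pB3, pC1, pC2] at this, Or.inl ⟨rfl, rfl⟩⟩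
  have adjAB3 : (BigP n u Y Z).Adj pA pB3 := by
    rw [BigP, SimpleGraph.fromRel_adj]
    exact ⟨fun h => by have := congrArg (pmark (Y := Y) (Z := Z)) h; simp [pmark] at this, Or.inr trivial⟩
  have adjB3C3 : (BigP n u Y Z).Adj pB3 c3 := hc3adj
  -- preimage machinery
  have pre_ne : ∀ {p : BigPVert n u Y Z}, φ (Sum.inl ()) ≠ p →
      Sum.inl () ∉ φ ⁻¹' {p} := fun h hx => h hx
  have pre_disj : ∀ {p q : BigPVert n u Y Z}, p ≠ q →
      Disjoint (φ ⁻¹' {p}) (φ ⁻¹' {q}) := by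
    intro p q hpq
    refine Set.disjoint_left.mpr fun {t} ht ht' => hpq ?_
    simp only [Set.mem_preimage, Set.mem_singleton_iff] at ht ht'
    exact ht ▸ ht'
  have edge_wit : ∀ {p q : BigPVert n u Y Z}, (BigP n u Y Z).Adj p q →
      ∃ a ∈ φ ⁻¹' {p}, ∃ b ∈ φ ⁻¹' {q}, (BigT n u X).Adj a b := by
    intro p q h
    obtain ⟨a, b, hab, ha, hb⟩ := hedge h
    exact ⟨a, ha, b, hb, hab⟩
  -- distinctness of the seven vertices
  have nAB1 : pA ≠ pB1 := fun h => by have := congrArg (pmark (Y := Y) (Z := Z)) h; simp [pmark, pA, pB1, pB2, pB3, pC1, pC2] at this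
  have nAB2 : pA ≠ pB2 := fun h => by have := congrArg (pmark (Y := Y) (Z := Z)) h; simp [pmark, pA, pB1, pB2, pB3, pC1, pC2] at this
  have nAB3 : pA ≠ pB3 := fun h => by have := congrArg (pmark (Y := Y) (Z := Z)) h; simp [pmark] at this
  have nAC1 : pA ≠ pC1 := fun h => by have := congrArg (pmark (Y := Y) (Z := Z)) h; simp [pmark, pA, pB1, pB2, pB3, pC1, pC2] at this
  have nAC2 : pA ≠ pC2 := fun h => by have := congrArg (pmark (Y := Y) (Z := Z)) h; simp [pmark, pA, pB1, pB2, pB3, pC1, pC2] at this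
  have nAC3 : pA ≠ c3 := fun h => hc3b _ h.symm
  have nB12 : pB1 ≠ pB2 := fun h => by have := congrArg (pmark (Y := Y) (Z := Z)) h; simp [pmark, pA, pB1, pB2, pB3, pC1, pC2] at this
  have nB13 : pB1 ≠ pB3 := fun h => by have := congrArg (pmark (Y := Y) (Z := Z)) h; simp [pmark] at this
  have nB23 : pB2 ≠ pB3 := fun h => by have := congrArg (pmark (Y := Y) (Z := Z)) h; simp [pmark] at this
  have nB1C1 : pB1 ≠ pC1 := fun h => by have := congrArg (pmark (Y := Y) (Z := Z)) h; simp [pmark, pA, pB1, pB2, pB3, pC1, pC2] at this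
  have nB2C2 : pB2 ≠ pC2 := fun h => by have := congrArg (pmark (Y := Y) (Z := Z)) h; simp [pmark, pA, pB1, pB2, pB3, pC1, pC2] at this
  have nB3C3 : pB3 ≠ c3 := fun h => hc3a h.symm
  exact spider (hconn pA) (hconn pB1) (hconn pB2) (hconn pB3)
    (pre_ne (hw2 _)) (pre_ne (hw2 _)) (pre_ne (hw2 _)) (pre_ne hw1)
    (pre_disj nAB1) (pre_disj nAB2) (pre_disj nAB3)
    (pre_disj nAC1) (pre_disj nAC2) (pre_disj nAC3)
    (pre_disj nB12) (pre_disj nB13) (pre_disj nB23)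
    (pre_disj nB1C1) (pre_disj nB2C2) (pre_disj nB3C3)
    (edge_wit adjAB1) (edge_wit adjAB2) (edge_wit adjAB3)
    (edge_wit adjB1C1) (edge_wit adjB2C2) (edge_wit adjB3C3)

def pside : BigPVert n u Y Z → ℕ := fun v =>
  match v with
  | .inl _ => 0
  | .inr (.inl _) => 1
  | .inr (.inr _) => 2

def pfst : BigPVert n u Y Z → Option (α × α) := fun v =>
  match v with
  | .inr (.inl ⟨y, _⟩) => some y.1
  | _ => none

lemma bigPVert_cases (p : BigPVert n u Y Z) :
    p = Sum.inl () ∨ (∃ a, p = Sum.inr (Sum.inl a)) ∨ ∃ a, p = Sum.inr (Sum.inr a) := by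
  rcases p with _ | (a | a)
  · exact Or.inl rfl
  · exact Or.inr (Or.inl ⟨a, rfl⟩)
  · exact Or.inr (Or.inr ⟨a, rfl⟩)

end Tside


/-- With `X, Y, Z` nonempty, `|X| ≥ 2` and `|Y| ≥ 2`, every minor embedding `φ` of `P` in
`T` satisfies `φ(r_T) = r_P`. -/
theorem stmt_12 {α : Type*} [PartialOrder α] [Fintype α] (n : ℕ) (u : Fin n → α)
    (hu : Function.Surjective u)
    (X Y : Finset (α × α)) (Z : Finset α)
    (hX : X.Nonempty) (hY : Y.Nonempty) (hZ : Z.Nonempty)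
    (hX2 : 2 ≤ X.card) (hY2 : 2 ≤ Y.card)
    (φ : BigTVert n u X → BigPVert n u Y Z)
    (hφ : IsMinorEmbedding (BigT n u X) (BigP n u Y Z) φ) :
    φ (Sum.inl ()) = Sum.inl () := by
  by_contra hne
  rcases bigPVert_cases (φ (Sum.inl ())) with hww | ⟨⟨y0, v0⟩, hww⟩ | ⟨⟨z0, v0⟩, hww⟩
  · exact hne hww
  · -- image of the root lies in some Q_{y0}; pick y1 ≠ y0 and an R_z arm
    obtain ⟨y1v, hy1Y, hy1ne⟩ := Finset.exists_mem_ne (s := Y) (by omega) y0.1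
    obtain ⟨zv, hzv⟩ := hZ
    refine master φ hφ ⟨y1v, hy1Y⟩
      (Sum.inr (Sum.inr ⟨⟨zv, hzv⟩, Sum.inl (⟨0, by omega⟩ : Fin (n+2))⟩)) ?_ ?_ ?_ hne ?_ ?_
    · simp only [BigP, SimpleGraph.fromRel_adj]
      refine ⟨fun h => ?_, Or.inl rfl⟩
      have := congrArg (pside (n := n) (u := u)) h
      simp [pside] at this
    · intro h
      have := congrArg (pside (n := n) (u := u)) h
      simp [pside] at this
    · intro v h
      have := congrArg (pside (n := n) (u := u)) h
      simp [pside] at this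
    · intro v h
      rw [hww] at h
      have := congrArg (pfst (n := n) (u := u)) h
      simp only [pfst] at this
      exact hy1ne (Option.some_inj.mp this).symm
    · intro h
      rw [hww] at h
      have := congrArg (pside (n := n) (u := u)) h
      simp [pside] at this
  · -- image of the root lies in some R_{z0}; pick two distinct Q's
    obtain ⟨y1v, hy1Y, y2v, hy2Y, hyne⟩ := (Finset.one_lt_card (s := Y)).mp (by omega)
    refine master φ hφ ⟨y1v, hy1Y⟩
      (Sum.inr (Sum.inl ⟨⟨y2v, hy2Y⟩, Sum.inl ()⟩)) ?_ ?_ ?_ hne ?_ ?_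
    · simp only [BigP, SimpleGraph.fromRel_adj]
      refine ⟨fun h => ?_, Or.inl trivial⟩
      have := congrArg (pside (n := n) (u := u)) h
      simp [pside] at this
    · intro h
      have := congrArg (pside (n := n) (u := u)) h
      simp [pside] at this
    · intro v h
      have := congrArg (pfst (n := n) (u := u)) h
      simp only [pfst] at this
      exact hyne (Option.some_inj.mp this).symm
    · intro v h
      rw [hww] at h
      have := congrArg (pside (n := n) (u := u)) h
      simp [pside] at this
    · intro h
      rw [hww] at h
      have := congrArg (pside (n := n) (u := u)) h
      simp [pside] at this
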